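/- For every real ε with 0 < ε ≤ 1/4 and every natural number n ≥ 1, there exists a subset A of the Hamming cube {0,1}ⁿ with |A| ≥ exp(2·(1/2 − 2ε)²·n) such that any two distinct elements x, y ∈ A satisfy d_h(x,y) ≥ 2ε. -/

import Mathlib

open Real Finset

lemma half_bound (t : ℝ) : (1 + Real.exp (-t)) / 2 ≤ Real.exp (-t/2 + t^2/8) := by
  have h : (1 + Real.exp (-t)) / 2 = Real.exp (-t/2) * Real.cosh (t/2) := by
    rw [Real.cosh_eq]
    have e1 : Real.exp (-t/2) * Real.exp (t/2) = 1 := by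
      rw [← Real.exp_add]; ring_nf; exact Real.exp_zero
    have e2 : Real.exp (-t/2) * Real.exp (-t/2) = Real.exp (-t) := by
      rw [← Real.exp_add]; ring_nf
    have e3 : Real.exp (-(t/2)) = Real.exp (-t/2) := by ring_nf
    rw [e3]
    field_simp
    rw [e3]; nlinarith [e1, e2]
  rw [h, Real.exp_add]
  gcongr
  calc Real.cosh (t/2) ≤ Real.exp ((t/2)^2/2) := Real.cosh_le_exp_half_sq _
    _ = Real.exp (t^2/8) := by ring_nf

lemma mgf_bound (n m : ℕ) (hmn : m ≤ n) (t : ℝ) (ht : 0 ≤ t) :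
    (∑ k ∈ Finset.range (m+1), (n.choose k : ℝ)) ≤
      Real.exp (t * m) * (Real.exp (-t) + 1) ^ n := by
  have step1 : (∑ k ∈ Finset.range (m+1), (n.choose k : ℝ)) ≤
      ∑ k ∈ Finset.range (m+1), (n.choose k : ℝ) * Real.exp (t * m - t * k) := by
    apply Finset.sum_le_sum
    intro k hk
    have hk' : k ≤ m := Nat.lt_succ_iff.mp (Finset.mem_range.mp hk)
    have h1 : (1:ℝ) ≤ Real.exp (t * m - t * k) := by
      rw [Real.one_le_exp_iff]
      have : (k:ℝ) ≤ m := Nat.cast_le.mpr hk'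
      nlinarith
    have h0 : (0:ℝ) ≤ (n.choose k : ℝ) := Nat.cast_nonneg _
    nlinarith
  have step2 : (∑ k ∈ Finset.range (m+1), (n.choose k : ℝ) * Real.exp (t * m - t * k)) ≤
      ∑ k ∈ Finset.range (n+1), (n.choose k : ℝ) * Real.exp (t * m - t * k) := by
    apply Finset.sum_le_sum_of_subset_of_nonneg
    · exact Finset.range_subset_range.mpr (by omega)
    · intro k _ _; positivity
  have step3 : (∑ k ∈ Finset.range (n+1), (n.choose k : ℝ) * Real.exp (t * m - t * k)) =
      Real.exp (t * m) * (Real.exp (-t) + 1) ^ n := by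
    rw [add_pow, Finset.mul_sum]
    apply Finset.sum_congr rfl
    intro k hk
    rw [← Real.exp_nat_mul, one_pow, mul_one, ← mul_assoc, ← Real.exp_add, mul_comm]
    congr 2
    ring
  linarith

lemma tail_bound (n m : ℕ) (hn : 1 ≤ n) (hmn : m ≤ n) (hm : 2 * (m:ℝ) ≤ n) :
    (∑ k ∈ Finset.range (m+1), (n.choose k : ℝ)) ≤
      2 ^ n * Real.exp (-2 * n * (1/2 - (m:ℝ)/n) ^ 2) := by
  have hn0 : (0:ℝ) < n := by positivity
  set a : ℝ := (m:ℝ)/n with ha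
  have hma : (m:ℝ) = a * n := by rw [ha, div_mul_cancel₀ _ hn0.ne']
  have ha2 : 2 * a ≤ 1 := by
    rw [ha, mul_div_assoc', div_le_one hn0]; linarith
  set t : ℝ := 4 * (1/2 - a) with htdef
  have ht : 0 ≤ t := by rw [htdef]; linarith
  calc (∑ k ∈ Finset.range (m+1), (n.choose k : ℝ))
      ≤ Real.exp (t * m) * (Real.exp (-t) + 1) ^ n := mgf_bound n m hmn t ht
    _ ≤ Real.exp (t * m) * (2 * Real.exp (-t/2 + t^2/8)) ^ n := by
        gcongr
        have := half_bound t; linarith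
    _ = 2 ^ n * Real.exp (t * m + n * (-t/2 + t^2/8)) := by
        rw [mul_pow, ← Real.exp_nat_mul, ← mul_assoc, mul_comm (Real.exp (t*↑m)) ((2:ℝ)^n), mul_assoc, ← Real.exp_add]
    _ = 2 ^ n * Real.exp (-2 * n * (1/2 - a) ^ 2) := by
        congr 1
        rw [hma, htdef]
        ring

lemma diff_card (n : ℕ) (a : Fin n → Bool) (k : ℕ) :
    ((univ : Finset (Fin n → Bool)).filter fun y =>
      (univ.filter fun i => y i ≠ a i).card = k).card = n.choose k := by
  have h1 : ((univ : Finset (Fin n)).powersetCard k).card = n.choose k := by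
    rw [Finset.card_powersetCard, Finset.card_univ, Fintype.card_fin]
  rw [← h1]
  apply Finset.card_nbij (fun y => univ.filter fun i => y i ≠ a i)
  · intro y hy
    rw [Finset.mem_coe, Finset.mem_powersetCard]
    exact ⟨Finset.subset_univ _, (Finset.mem_filter.mp hy).2⟩
  · intro y _ y' _ h
    funext i
    have := Finset.ext_iff.mp h i
    simp only [Finset.mem_filter, Finset.mem_univ, true_and] at this
    revert this
    cases y i <;> cases y' i <;> cases a i <;> simp
  · intro S hS
    simp only [Finset.mem_coe, Finset.mem_powersetCard] at hS
    obtain ⟨-, hcard⟩ := hS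
    refine ⟨fun i => if i ∈ S then !(a i) else a i, ?_, ?_⟩
    · simp only [Finset.coe_filter, Set.mem_setOf_eq, Finset.mem_univ, true_and]
      rw [show (univ.filter fun i => (if i ∈ S then !(a i) else a i) ≠ a i) = S by
        ext i
        simp only [Finset.mem_filter, Finset.mem_univ, true_and]
        by_cases h : i ∈ S <;> simp [h]]
      exact hcard
    · ext i
      simp only [Finset.mem_filter, Finset.mem_univ, true_and]
      by_cases h : i ∈ S <;> simp [h]

lemma ball_card (n : ℕ) (a : Fin n → Bool) (r : ℕ) :
    ((univ : Finset (Fin n → Bool)).filter fun y =>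
      (univ.filter fun i => y i ≠ a i).card ≤ r).card = ∑ k ∈ Finset.range (r+1), n.choose k := by
  induction r with
  | zero =>
      rw [Finset.sum_range_one]
      rw [← diff_card n a 0]
      congr 1
      apply Finset.filter_congr
      intro y _
      simp [Nat.le_zero]
  | succ r ih =>
      have hsplit : ((univ : Finset (Fin n → Bool)).filter fun y =>
          (univ.filter fun i => y i ≠ a i).card ≤ r+1) =
          ((univ : Finset (Fin n → Bool)).filter fun y =>
            (univ.filter fun i => y i ≠ a i).card ≤ r) ∪
          ((univ : Finset (Fin n → Bool)).filter fun y =>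
            (univ.filter fun i => y i ≠ a i).card = r+1) := by
        clear ih
        ext y
        simp only [Finset.mem_filter, Finset.mem_union, Finset.mem_univ, true_and]
        omega
      have hdisj : Disjoint
          ((univ : Finset (Fin n → Bool)).filter fun y =>
            (univ.filter fun i => y i ≠ a i).card ≤ r)
          ((univ : Finset (Fin n → Bool)).filter fun y =>
            (univ.filter fun i => y i ≠ a i).card = r+1) := by
        clear ih
        simp only [Finset.disjoint_left, Finset.mem_filter, Finset.mem_univ, true_and]
        intro y h1 h2
        omega
      rw [hsplit, Finset.card_union_of_disjoint hdisj, ih, diff_card,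
        Finset.sum_range_succ (n := r+1)]

set_option maxHeartbeats 2000000 in
/-- packing number of the Hamming cube: for `0 < ε ≤ 1/4` and `n ≥ 1`
there is a set `A ⊆ {0,1}ⁿ` of cardinality at least `exp (2 (1/2 - 2ε)² n)` whose distinct
elements are pairwise at normalized Hamming distance at least `2ε`. -/
theorem stmt1 (ε : ℝ) (hε0 : 0 < ε) (hε1 : ε ≤ 1 / 4) (n : ℕ) (hn : 1 ≤ n) :
    ∃ A : Finset (Fin n → Bool),
      Real.exp (2 * (1 / 2 - 2 * ε) ^ 2 * n) ≤ A.card ∧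
      ∀ x ∈ A, ∀ y ∈ A, x ≠ y →
        2 * ε ≤ ((Finset.univ.filter fun i => x i ≠ y i).card : ℝ) / n := by
  classical
  have hn0 : (0:ℝ) < n := by exact_mod_cast hn
  set d : ℕ := ⌈2*ε*n⌉₊ with hd
  have hd1 : 1 ≤ d := Nat.ceil_pos.mpr (by positivity)
  have hdle : 2*ε*n ≤ (d:ℝ) := Nat.le_ceil _
  have hdlt : (d:ℝ) < 2*ε*n + 1 := Nat.ceil_lt_add_one (by positivity)
  clear_value d
  set P : Finset (Fin n → Bool) → Prop := fun A =>
    ∀ x ∈ A, ∀ y ∈ A, x ≠ y → d ≤ (Finset.univ.filter fun i => x i ≠ y i).card with hP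
  obtain ⟨A, hAP, hAmax⟩ : ∃ A, P A ∧ ∀ B, P B → B.card ≤ A.card := by
    have hne : ((univ : Finset (Finset (Fin n → Bool))).filter P).Nonempty :=
      ⟨∅, Finset.mem_filter.mpr ⟨Finset.mem_univ _, fun x hx => absurd hx (Finset.notMem_empty x)⟩⟩
    obtain ⟨A, hA, hmax⟩ := Finset.exists_max_image _ Finset.card hne
    exact ⟨A, (Finset.mem_filter.mp hA).2,
      fun B hB => hmax B (Finset.mem_filter.mpr ⟨Finset.mem_univ _, hB⟩)⟩
  refine ⟨A, ?_, ?_⟩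
  · -- cardinality bound
    have hcov : ∀ z : Fin n → Bool, ∃ a ∈ A,
        (Finset.univ.filter fun i => z i ≠ a i).card ≤ d - 1 := by
      intro z
      by_contra hcon
      push_neg at hcon
      have hzA : z ∉ A := by
        intro hz
        have h1 := hcon z hz
        have h0 : (Finset.univ.filter fun i => z i ≠ z i).card = 0 := by simp
        omega
      have hP' : P (insert z A) := by
        intro x hx y hy hxy
        rcases Finset.mem_insert.mp hx with rfl | hx' <;>
          rcases Finset.mem_insert.mp hy with rfl | hy'
        · exact absurd rfl hxy
        · have := hcon y hy'; omega
        · have hsym : (Finset.univ.filter fun i => x i ≠ y i).card =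
              (Finset.univ.filter fun i => y i ≠ x i).card := by
            congr 1; ext i; simp [ne_comm]
          rw [hsym]
          have := hcon x hx'; omega
        · exact hAP x hx' y hy' hxy
      have hle := hAmax _ hP'
      rw [Finset.card_insert_of_notMem hzA] at hle
      omega
    set f : (Fin n → Bool) → Finset (Fin n → Bool) := fun a =>
        univ.filter fun z => (Finset.univ.filter fun i => z i ≠ a i).card ≤ d - 1 with hf
    clear_value f
    have hunion : (univ : Finset (Fin n → Bool)) ⊆ A.biUnion f := by
      intro z _
      rw [Finset.mem_biUnion]
      obtain ⟨a, ha, hle⟩ := hcov z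
      refine ⟨a, ha, ?_⟩
      rw [hf]
      exact Finset.mem_filter.mpr ⟨Finset.mem_univ _, hle⟩
    have hcount : (2:ℕ)^n ≤ A.card * ∑ k ∈ Finset.range ((d-1)+1), n.choose k := by
      calc (2:ℕ)^n = (univ : Finset (Fin n → Bool)).card := by
            simp [Finset.card_univ]
        _ ≤ (A.biUnion f).card := Finset.card_le_card hunion
        _ ≤ ∑ a ∈ A, (f a).card := Finset.card_biUnion_le
        _ = ∑ a ∈ A, ∑ k ∈ Finset.range ((d-1)+1), n.choose k := by
            apply Finset.sum_congr rfl
            intro a _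
            rw [hf]
            exact ball_card n a (d-1)
        _ = A.card * ∑ k ∈ Finset.range ((d-1)+1), n.choose k := by
            rw [Finset.sum_const, smul_eq_mul]
    -- real-side estimates
    have hmlt : ((d-1 : ℕ):ℝ) < 2*ε*n := by
      have h1 : (d:ℝ) < 2*ε*n + 1 := hdlt
      have h2 : ((d-1:ℕ):ℝ) = (d:ℝ) - 1 := by
        rw [Nat.cast_sub hd1]; simp
      rw [h2]; linarith
    have h4ε : 2*ε*n ≤ n/2 := by nlinarith
    have hmn : d - 1 ≤ n := by
      have : ((d-1:ℕ):ℝ) ≤ (n:ℝ) := by linarith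
      exact_mod_cast this
    have hm2 : 2 * ((d-1:ℕ):ℝ) ≤ n := by linarith
    have hV := tail_bound n (d-1) hn hmn hm2
    set m : ℕ := d - 1
    set u : ℝ := (m:ℝ)/n with hu
    have hun : u * n = (m:ℝ) := by rw [hu, div_mul_cancel₀ _ hn0.ne']
    have hult : u < 2*ε := by
      rw [hu, div_lt_iff₀ hn0]; linarith
    have hu0 : 0 ≤ u := by positivity
    have hsq : (1/2 - 2*ε)^2 ≤ (1/2 - u)^2 := by nlinarith
    have hV2 : (∑ k ∈ Finset.range (m+1), (n.choose k : ℝ)) ≤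
        2^n * Real.exp (-2*n*(1/2 - 2*ε)^2) := by
      refine hV.trans ?_
      have hexp : Real.exp (-2*(n:ℝ)*(1/2 - u)^2) ≤ Real.exp (-2*(n:ℝ)*(1/2 - 2*ε)^2) := by
        apply Real.exp_le_exp.mpr
        nlinarith [hsq, hn0.le]
      have h2n : (0:ℝ) ≤ 2^n := by positivity
      exact mul_le_mul_of_nonneg_left hexp h2n
    -- combine
    set V : ℝ := ∑ k ∈ Finset.range (m+1), (n.choose k : ℝ) with hVdef
    have hVpos : 0 < V := by
      have h1 : ((n.choose 0 : ℕ):ℝ) ≤ V := by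
        apply Finset.single_le_sum (f := fun k => (n.choose k : ℝ))
        · intro i _; positivity
        · exact Finset.mem_range.mpr (by omega)
      simp at h1
      linarith
    have hcountR : (2:ℝ)^n ≤ (A.card:ℝ) * V := by
      rw [hVdef]
      exact_mod_cast hcount
    set E : ℝ := 2 * (1 / 2 - 2 * ε) ^ 2 * n with hE
    have key : Real.exp E * V ≤ (A.card:ℝ) * V := by
      calc Real.exp E * V ≤ Real.exp E * (2^n * Real.exp (-2*n*(1/2 - 2*ε)^2)) :=
            mul_le_mul_of_nonneg_left hV2 (Real.exp_pos E).le
        _ = (Real.exp E * Real.exp (-2*(n:ℝ)*(1/2 - 2*ε)^2)) * 2^n := by ring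
        _ = 2^n := by
            rw [← Real.exp_add,
              show E + -2*(n:ℝ)*(1/2 - 2*ε)^2 = 0 from by rw [hE]; ring,
              Real.exp_zero, one_mul]
        _ ≤ (A.card:ℝ) * V := hcountR
    exact le_of_mul_le_mul_right key hVpos
  · -- separation
    intro x hx y hy hxy
    have h1 := hAP x hx y hy hxy
    rw [le_div_iff₀ hn0]
    calc 2*ε*n ≤ (d:ℝ) := hdle
      _ ≤ _ := Nat.cast_le.mpr h1
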